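/- For every d ≥ 1 and every decreasing probability distribution r on [d²] (i.e., r : Fin (d²) → ℝ with r₁ ≥ r₂ ≥ … ≥ r_{d²} ≥ 0 and ∑ᵢ rᵢ = 1), there exists a positive semidefinite matrix ρ ∈ M_{d²}(ℂ), with rows and columns indexed by Fin d × Fin d, having trace 1, whose eigenvalues listed in decreasing order are exactly r₁, …, r_{d²}, and whose two partial traces satisfy tr_B(ρ) = (1/d)·I_d and tr_A(ρ) = (1/d)·I_d. -/

import Mathlib

open Matrix Polynomial in
lemma my_charpoly_diagonal {n : Type*} [Fintype n] [DecidableEq n] {R : Type*} [CommRing R]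
    (v : n → R) : (Matrix.diagonal v).charpoly = ∏ i, (X - C (v i)) := by
  have h : charmatrix (Matrix.diagonal v) = Matrix.diagonal fun i => (X : R[X]) - C (v i) := by
    ext i j
    rcases eq_or_ne i j with rfl | hij
    · simp [charmatrix_apply_eq]
    · simp [charmatrix_apply_ne _ _ _ hij, Matrix.diagonal_apply_ne _ hij]
  rw [Matrix.charpoly, h, Matrix.det_diagonal]

open Matrix Polynomial in
lemma my_roots_charpoly_diagonal {n : Type*} [Fintype n] [DecidableEq n]
    (v : n → ℂ) : (Matrix.diagonal v).charpoly.roots = Multiset.map v Finset.univ.val := by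
  rw [my_charpoly_diagonal]
  have h := Polynomial.roots_multiset_prod_X_sub_C (Multiset.map v Finset.univ.val)
  rw [← h, Multiset.map_map]
  congr 1

open Matrix Polynomial in
lemma my_charpoly_conj {n : Type*} [Fintype n] [DecidableEq n]
    (U D : Matrix n n ℂ) (hU : U * star U = 1) (hU' : star U * U = 1) :
    (U * D * star U).charpoly = D.charpoly := by
  have hcomm : ∀ M : Matrix n n ℂ[X], M * Matrix.scalar n (X : ℂ[X]) = Matrix.scalar n (X : ℂ[X]) * M := by
    intro M
    ext i j
    simp [Matrix.scalar_apply, Matrix.mul_diagonal, Matrix.diagonal_mul, mul_comm]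
  have hmap : ∀ (A B : Matrix n n ℂ), (A * B).map (C : ℂ →+* ℂ[X]) = A.map C * B.map C := by
    intro A B; exact Matrix.map_mul
  have h1 : charmatrix (U * D * star U) = U.map (C : ℂ →+* ℂ[X]) * charmatrix D * (star U).map (C : ℂ →+* ℂ[X]) := by
    unfold charmatrix
    rw [mul_sub, sub_mul]
    congr 1
    · rw [hcomm (U.map C), mul_assoc, ← hmap, hU, Matrix.map_one C (map_zero C) (map_one C),
        mul_one]
    · simp only [RingHom.mapMatrix_apply]
      rw [hmap, hmap]
  have hdet1 : (U.map (C : ℂ →+* ℂ[X])).det * ((star U).map (C : ℂ →+* ℂ[X])).det = 1 := by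
    rw [← Matrix.det_mul, ← hmap, hU, Matrix.map_one C (map_zero C) (map_one C), Matrix.det_one]
  rw [Matrix.charpoly, Matrix.charpoly, h1, Matrix.det_mul, Matrix.det_mul]
  ring_nf
  rw [mul_comm] at hdet1
  calc (U.map C).det * (charmatrix D).det * ((star U).map C).det
      = (charmatrix D).det * (((star U).map C).det * (U.map C).det) := by ring
    _ = (charmatrix D).det := by rw [hdet1, mul_one]


lemma my_exists_perm_fin {m : ℕ} (f g : Fin m → ℝ)
    (h : Multiset.map f Finset.univ.val = Multiset.map g Finset.univ.val) :
    ∃ σ : Equiv.Perm (Fin m), f ∘ σ = g := by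
  have hperm : (List.ofFn f).Perm (List.ofFn g) := by
    rw [← Multiset.coe_eq_coe, ← Fin.univ_val_map, ← Fin.univ_val_map]
    exact h
  have hp2 : (List.ofFn (f ∘ Tuple.sort f)).Perm (List.ofFn (g ∘ Tuple.sort g)) :=
    ((Equiv.Perm.ofFn_comp_perm (Tuple.sort f) f).trans hperm).trans
      (Equiv.Perm.ofFn_comp_perm (Tuple.sort g) g).symm
  have hs : f ∘ Tuple.sort f = g ∘ Tuple.sort g := by
    apply List.ofFn_injective
    exact List.Perm.eq_of_sortedLE
      (List.sortedLE_ofFn_iff.mpr (Tuple.monotone_sort f))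
      (List.sortedLE_ofFn_iff.mpr (Tuple.monotone_sort g)) hp2
  refine ⟨((Tuple.sort g).symm.trans (Tuple.sort f) : Equiv.Perm (Fin m)), ?_⟩
  funext x
  simpa using congrFun hs ((Tuple.sort g).symm x)


noncomputable def myzeta (d : ℕ) : ℂ := Complex.exp ((2 * Real.pi / d : ℝ) * Complex.I)

lemma myzeta_ne_zero (d : ℕ) : myzeta d ≠ 0 := Complex.exp_ne_zero _

lemma myzeta_conj (d : ℕ) : (starRingEnd ℂ) (myzeta d) = (myzeta d)⁻¹ := by
  rw [myzeta, ← Complex.exp_conj, ← Complex.exp_neg]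
  congr 1
  simp only [map_mul, Complex.conj_I, Complex.conj_ofReal]
  ring

lemma myzeta_pow_d (d : ℕ) (hd : 0 < d) : myzeta d ^ d = 1 := by
  rw [myzeta, ← Complex.exp_nat_mul]
  have : (d : ℂ) * (((2 * Real.pi / d : ℝ) : ℂ) * Complex.I) = 2 * (Real.pi : ℂ) * Complex.I := by
    have hdne : (d : ℂ) ≠ 0 := Nat.cast_ne_zero.mpr hd.ne'
    push_cast
    field_simp
  rw [this, Complex.exp_two_pi_mul_I]

lemma myzeta_pow_ne_one (d : ℕ) (hd : 0 < d) (k : ℕ) (hk : 0 < k) (hkd : k < d) :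
    myzeta d ^ k ≠ 1 := by
  rw [myzeta, ← Complex.exp_nat_mul]
  intro h
  rw [Complex.exp_eq_one_iff] at h
  obtain ⟨n, hn⟩ := h
  have him := congrArg Complex.im hn
  simp [Complex.mul_im, Complex.mul_re] at him
  -- him : k * (2 * π / d) = n * (2 * π)
  have hπ : (0:ℝ) < 2 * Real.pi := by positivity
  have hdr : (0:ℝ) < d := Nat.cast_pos.mpr hd
  have : (k : ℝ) = n * d := by
    field_simp at him
    nlinarith [Real.pi_pos]
  have h1 : (0:ℝ) < (k:ℝ) := Nat.cast_pos.mpr hk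
  have h2 : (k:ℝ) < d := by exact_mod_cast hkd
  have hn0 : (0:ℝ) < (n:ℝ) := by nlinarith
  have hn1 : (1:ℝ) ≤ (n:ℝ) := by exact_mod_cast (by exact_mod_cast hn0 : (0:ℤ) < n)
  nlinarith

lemma my_fourier_sum (d : ℕ) (hd : 0 < d) (b b' : Fin d) :
    ∑ i : Fin d, (((myzeta d) ^ (b : ℕ))⁻¹ * (myzeta d) ^ ((b' : ℕ))) ^ (i : ℕ)
      = if b = b' then (d : ℂ) else 0 := by
  set x : ℂ := ((myzeta d) ^ (b : ℕ))⁻¹ * (myzeta d) ^ ((b' : ℕ)) with hx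
  rcases eq_or_ne b b' with rfl | hne
  · simp [hx, inv_mul_cancel₀ (pow_ne_zero _ (myzeta_ne_zero d))]
  · rw [if_neg hne]
    have hxd : x ^ d = 1 := by
      rw [hx, mul_pow, inv_pow, ← pow_mul, ← pow_mul, mul_comm (b:ℕ) d, mul_comm (b':ℕ) d,
        pow_mul, pow_mul, myzeta_pow_d d hd, one_pow, one_pow, inv_one, one_mul]
    have hx1 : x ≠ 1 := by
      intro h
      have hζb : (myzeta d) ^ (b : ℕ) ≠ 0 := pow_ne_zero _ (myzeta_ne_zero d)
      have heq : (myzeta d) ^ ((b' : ℕ)) = (myzeta d) ^ ((b : ℕ)) := by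
        rw [hx] at h
        field_simp at h
        exact h
      rcases Nat.lt_or_ge (b : ℕ) (b' : ℕ) with hlt | hge
      · have : myzeta d ^ ((b' : ℕ) - (b : ℕ)) = 1 := by
          have := heq
          rw [← Nat.sub_add_cancel hlt.le, pow_add] at this
          exact mul_right_cancel₀ hζb (by rw [one_mul]; exact this)
        exact myzeta_pow_ne_one d hd _ (by omega) (by omega) this
      · have hlt' : (b' : ℕ) < (b : ℕ) := by
          rcases Nat.lt_or_ge (b' : ℕ) (b : ℕ) with h' | h'
          · exact h'
          · exfalso; exact hne (Fin.ext (le_antisymm h' hge))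
        have : myzeta d ^ ((b : ℕ) - (b' : ℕ)) = 1 := by
          have := heq.symm
          rw [← Nat.sub_add_cancel hlt'.le, pow_add] at this
          exact mul_right_cancel₀ (pow_ne_zero _ (myzeta_ne_zero d))
            (by rw [one_mul]; exact this)
        exact myzeta_pow_ne_one d hd _ (by omega) (by omega) this
    rw [Fin.sum_univ_eq_sum_range (fun i => x ^ i) d, geom_sum_eq hx1, hxd, sub_self, zero_div]

noncomputable def bellU (d : ℕ) : Matrix (Fin d × Fin d) (Fin d × Fin d) ℂ :=
  fun p q => ((Real.sqrt d : ℝ) : ℂ)⁻¹ * myzeta d ^ (p.1.val * q.2.val) *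
    (if p.2 = p.1 + q.1 then 1 else 0)

lemma bellU_star (d : ℕ) (p q : Fin d × Fin d) :
    star (bellU d p q) = ((Real.sqrt d : ℝ) : ℂ)⁻¹ * (myzeta d ^ (p.1.val * q.2.val))⁻¹ *
      (if p.2 = p.1 + q.1 then 1 else 0) := by
  by_cases h : p.2 = p.1 + q.1
  · simp only [bellU, h, if_pos rfl, mul_one, Complex.star_def, map_mul, map_pow, myzeta_conj,
      inv_pow, map_inv₀, Complex.conj_ofReal, if_true, map_one]
  · simp [bellU, h]

lemma sum_delta_mul_delta {α : Type*} [Fintype α] [DecidableEq α] (c c' : α) :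
    ∑ j : α, (if j = c then (1:ℂ) else 0) * (if j = c' then 1 else 0)
      = if c = c' then 1 else 0 := by
  rcases eq_or_ne c c' with rfl | h
  · simp
  · rw [if_neg h]
    apply Finset.sum_eq_zero
    intro j _
    rcases eq_or_ne j c with rfl | hj
    · simp [h]
    · simp [hj]

lemma sqrt_inv_sq (d : ℕ) (hd : 0 < d) :
    ((Real.sqrt d : ℝ) : ℂ)⁻¹ * ((Real.sqrt d : ℝ) : ℂ)⁻¹ = ((d : ℂ))⁻¹ := by
  rw [← mul_inv]
  congr 1
  rw [← Complex.ofReal_mul, Real.mul_self_sqrt (by positivity)]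
  simp

lemma bellU_unitary (d : ℕ) [NeZero d] : star (bellU d) * bellU d = 1 := by
  have hd : 0 < d := Nat.pos_of_ne_zero (NeZero.ne d)
  ext ⟨a, b⟩ ⟨a', b'⟩
  rw [Matrix.mul_apply, Fintype.sum_prod_type]
  have key : ∀ i : Fin d,
      ∑ j : Fin d, (star (bellU d)) (a, b) (i, j) * bellU d (i, j) (a', b')
        = (((d : ℂ))⁻¹ * ((myzeta d ^ ((b : ℕ)))⁻¹ * myzeta d ^ ((b' : ℕ))) ^ (i : ℕ)) *
            (if a = a' then 1 else 0) := by
    intro i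
    have hterm : ∀ j : Fin d,
        (star (bellU d)) (a, b) (i, j) * bellU d (i, j) (a', b')
          = (((d : ℂ))⁻¹ * ((myzeta d ^ ((b : ℕ)))⁻¹ * myzeta d ^ ((b' : ℕ))) ^ (i : ℕ)) *
            ((if j = i + a then (1:ℂ) else 0) * (if j = i + a' then 1 else 0)) := by
      intro j
      rw [Matrix.star_apply, bellU_star]
      show ((Real.sqrt d : ℝ) : ℂ)⁻¹ * (myzeta d ^ ((i:ℕ) * (b:ℕ)))⁻¹ *
            (if j = i + a then (1:ℂ) else 0) *
          (((Real.sqrt d : ℝ) : ℂ)⁻¹ * myzeta d ^ ((i:ℕ) * (b':ℕ)) *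
            (if j = i + a' then (1:ℂ) else 0)) = _
      rw [mul_pow, inv_pow, ← pow_mul, ← pow_mul, mul_comm (b:ℕ) (i:ℕ), mul_comm (b':ℕ) (i:ℕ)]
      rw [← sqrt_inv_sq d hd]
      ring
    rw [Finset.sum_congr rfl (fun j _ => hterm j), ← Finset.mul_sum, sum_delta_mul_delta]
    simp only [add_right_inj]
  rw [Finset.sum_congr rfl (fun i _ => key i), ← Finset.sum_mul, ← Finset.mul_sum,
    my_fourier_sum d hd b b', Matrix.one_apply]
  rcases eq_or_ne a a' with rfl | ha
  · rcases eq_or_ne b b' with rfl | hb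
    · simp [inv_mul_cancel₀ (show (d:ℂ) ≠ 0 from Nat.cast_ne_zero.mpr hd.ne')]
    · simp [hb, Prod.ext_iff]
  · simp [ha, Prod.ext_iff]

open ComplexOrder

/-- Partial trace over the second (B) tensor factor. -/
noncomputable def ptraceB {n m : ℕ} (ρ : Matrix (Fin n × Fin m) (Fin n × Fin m) ℂ) :
    Matrix (Fin n) (Fin n) ℂ :=
  fun i k => ∑ j : Fin m, ρ (i, j) (k, j)

/-- Partial trace over the first (A) tensor factor. -/
noncomputable def ptraceA {n m : ℕ} (ρ : Matrix (Fin n × Fin m) (Fin n × Fin m) ℂ) :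
    Matrix (Fin m) (Fin m) ℂ :=
  fun j l => ∑ i : Fin n, ρ (i, j) (i, l)

theorem stmt0 (d : ℕ) (hd : 1 ≤ d) (r : Fin (d ^ 2) → ℝ)
    (hr_dec : Antitone r) (hr_nonneg : ∀ i, 0 ≤ r i) (hr_sum : ∑ i, r i = 1) :
    ∃ ρ : Matrix (Fin d × Fin d) (Fin d × Fin d) ℂ,
      ρ.PosSemidef ∧ ρ.trace = 1 ∧
      (∃ hH : ρ.IsHermitian, ∃ σ : Equiv.Perm (Fin d × Fin d),
        ∀ p : Fin d × Fin d,
          hH.eigenvalues (σ p) = r (finCongr (pow_two d).symm (finProdFinEquiv p))) ∧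
      ptraceB ρ = (1 / (d : ℂ)) • 1 ∧ ptraceA ρ = (1 / (d : ℂ)) • 1 := by
  haveI : NeZero d := ⟨by omega⟩
  have hd0 : 0 < d := hd
  have hdC : (d : ℂ) ≠ 0 := Nat.cast_ne_zero.mpr hd0.ne'
  -- the eigenvalue function reindexed on Fin d × Fin d
  set g : Fin d × Fin d → ℝ := fun p => r (finCongr (pow_two d).symm (finProdFinEquiv p)) with hg
  set v : Fin d × Fin d → ℂ := fun p => ((g p : ℝ) : ℂ) with hv
  set U : Matrix (Fin d × Fin d) (Fin d × Fin d) ℂ := bellU d with hU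
  have hU1 : star U * U = 1 := bellU_unitary d
  have hU2 : U * star U = 1 := mul_eq_one_comm.mp hU1
  set ρ : Matrix (Fin d × Fin d) (Fin d × Fin d) ℂ := U * Matrix.diagonal v * star U with hρ
  -- sum of v is 1
  have hgsum : ∑ t : Fin d × Fin d, g t = 1 := by
    rw [← hr_sum]
    exact Fintype.sum_equiv ((finProdFinEquiv (m := d) (n := d)).trans
      (finCongr (pow_two d).symm)) _ _ (fun t => rfl)
  have hvsum : ∑ t : Fin d × Fin d, v t = 1 := by
    have h1 : ((∑ t : Fin d × Fin d, g t : ℝ) : ℂ) = 1 := by rw [hgsum]; norm_num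
    rw [← h1, Complex.ofReal_sum]
  -- positivity of ρ
  have hvpos : ∀ t, (0 : ℂ) ≤ v t := fun t => by
    show (0 : ℂ) ≤ ((g t : ℝ) : ℂ)
    exact Complex.zero_le_real.mpr (hr_nonneg _)
  have hPSD : ρ.PosSemidef := by
    rw [hρ, Matrix.star_eq_conjTranspose]
    exact (Matrix.posSemidef_diagonal_iff.mpr hvpos).mul_mul_conjTranspose_same U
  have hH : ρ.IsHermitian := hPSD.1
  -- trace
  have htrace : ρ.trace = 1 := by
    rw [hρ, Matrix.trace_mul_cycle, hU1, one_mul, Matrix.trace_diagonal, hvsum]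
  -- entry formula
  have hent : ∀ p q, ρ p q = ∑ t, U p t * v t * star (U q t) := by
    intro p q
    rw [hρ, Matrix.mul_apply]
    refine Finset.sum_congr rfl fun t _ => ?_
    rw [Matrix.mul_diagonal, Matrix.star_apply]
  -- partial trace B
  have hptB : ptraceB ρ = (1 / (d : ℂ)) • 1 := by
    ext i k
    show (∑ j : Fin d, ρ (i, j) (k, j)) = _
    rw [Finset.sum_congr rfl fun j _ => hent (i, j) (k, j), Finset.sum_comm]
    have key : ∀ t : Fin d × Fin d,
        ∑ j : Fin d, U (i, j) t * v t * star (U (k, j) t)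
          = v t * ((d:ℂ)⁻¹ * (myzeta d ^ ((i:ℕ) * (t.2:ℕ)) *
              (myzeta d ^ ((k:ℕ) * (t.2:ℕ)))⁻¹)) * (if i = k then 1 else 0) := by
      rintro ⟨a, b⟩
      have hterm : ∀ j : Fin d,
          U (i, j) (a, b) * v (a, b) * star (U (k, j) (a, b))
            = v (a, b) * ((d:ℂ)⁻¹ * (myzeta d ^ ((i:ℕ) * (b:ℕ)) *
                (myzeta d ^ ((k:ℕ) * (b:ℕ)))⁻¹)) *
              ((if j = i + a then (1:ℂ) else 0) * (if j = k + a then 1 else 0)) := by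
        intro j
        rw [hU, bellU_star]
        show ((Real.sqrt d : ℝ) : ℂ)⁻¹ * myzeta d ^ ((i:ℕ) * (b:ℕ)) *
            (if j = i + a then (1:ℂ) else 0) * v (a, b) *
            (((Real.sqrt d : ℝ) : ℂ)⁻¹ * (myzeta d ^ ((k:ℕ) * (b:ℕ)))⁻¹ *
            (if j = k + a then (1:ℂ) else 0)) = _
        rw [← sqrt_inv_sq d hd0]
        ring
      rw [Finset.sum_congr rfl fun j _ => hterm j, ← Finset.mul_sum, sum_delta_mul_delta]
      simp only [add_left_inj]
    rw [Finset.sum_congr rfl fun t _ => key t]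
    rcases eq_or_ne i k with rfl | hik
    · have h2 : ∀ t : Fin d × Fin d,
          v t * ((d:ℂ)⁻¹ * (myzeta d ^ ((i:ℕ) * (t.2:ℕ)) *
            (myzeta d ^ ((i:ℕ) * (t.2:ℕ)))⁻¹)) * (if i = i then (1:ℂ) else 0)
            = v t * (d:ℂ)⁻¹ := by
        intro t
        rw [if_pos rfl, mul_one, mul_inv_cancel₀ (pow_ne_zero _ (myzeta_ne_zero d)), mul_one]
      rw [Finset.sum_congr rfl fun t _ => h2 t, ← Finset.sum_mul, hvsum, one_mul]
      simp [Matrix.one_apply, one_div]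
    · simp [Matrix.one_apply, hik]
  -- partial trace A
  have hptA : ptraceA ρ = (1 / (d : ℂ)) • 1 := by
    ext j l
    show (∑ i : Fin d, ρ (i, j) (i, l)) = _
    rw [Finset.sum_congr rfl fun i _ => hent (i, j) (i, l)]
    have key : ∀ i : Fin d, ∀ t : Fin d × Fin d,
        U (i, j) t * v t * star (U (i, l) t)
          = v t * (d:ℂ)⁻¹ *
            ((if j = i + t.1 then (1:ℂ) else 0) * (if l = i + t.1 then 1 else 0)) := by
      rintro i ⟨a, b⟩
      rw [hU, bellU_star]
      show ((Real.sqrt d : ℝ) : ℂ)⁻¹ * myzeta d ^ ((i:ℕ) * (b:ℕ)) *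
          (if j = i + a then (1:ℂ) else 0) * v (a, b) *
          (((Real.sqrt d : ℝ) : ℂ)⁻¹ * (myzeta d ^ ((i:ℕ) * (b:ℕ)))⁻¹ *
          (if l = i + a then (1:ℂ) else 0)) = _
      have hz : myzeta d ^ ((i:ℕ)*(b:ℕ)) * (myzeta d ^ ((i:ℕ)*(b:ℕ)))⁻¹ = 1 :=
        mul_inv_cancel₀ (pow_ne_zero _ (myzeta_ne_zero d))
      calc _ = (((Real.sqrt d : ℝ) : ℂ)⁻¹ * ((Real.sqrt d : ℝ) : ℂ)⁻¹) *
              (myzeta d ^ ((i:ℕ)*(b:ℕ)) * (myzeta d ^ ((i:ℕ)*(b:ℕ)))⁻¹) *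
              (v (a,b) * ((if j = i + a then (1:ℂ) else 0) *
                (if l = i + a then 1 else 0))) := by ring
        _ = _ := by rw [hz, sqrt_inv_sq d hd0, mul_one]; ring
    rw [Finset.sum_congr rfl fun i _ => Finset.sum_congr rfl fun t _ => key i t]
    rcases eq_or_ne j l with rfl | hjl
    · have inner : ∀ i : Fin d, ∀ t : Fin d × Fin d,
          v t * (d:ℂ)⁻¹ * ((if j = i + t.1 then (1:ℂ) else 0) * (if j = i + t.1 then 1 else 0))
            = v t * (d:ℂ)⁻¹ * (if i = j - t.1 then 1 else 0) := by
        intro i t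
        congr 1
        rcases eq_or_ne j (i + t.1) with h | h
        · rw [if_pos h, one_mul,
            if_pos (show i = j - t.1 by rw [h]; exact (add_sub_cancel_right i t.1).symm)]
        · rw [if_neg h, zero_mul,
            if_neg (show ¬ i = j - t.1 from fun hh => h (by rw [hh, sub_add_cancel]))]
      rw [Finset.sum_congr rfl fun i _ => Finset.sum_congr rfl fun t _ => inner i t,
        Finset.sum_comm]
      have colsum : ∀ t : Fin d × Fin d,
          ∑ i : Fin d, v t * (d:ℂ)⁻¹ * (if i = j - t.1 then 1 else 0) = v t * (d:ℂ)⁻¹ := by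
        intro t
        rw [← Finset.mul_sum]
        simp
      rw [Finset.sum_congr rfl fun t _ => colsum t, ← Finset.sum_mul, hvsum, one_mul]
      simp [Matrix.one_apply, one_div]
    · have zero : ∀ i : Fin d, ∀ t : Fin d × Fin d,
          v t * (d:ℂ)⁻¹ * ((if j = i + t.1 then (1:ℂ) else 0) * (if l = i + t.1 then 1 else 0))
            = 0 := by
        intro i t
        rcases eq_or_ne l (i + t.1) with h | h
        · rw [if_neg (show ¬ j = i + t.1 from fun hh => hjl (hh.trans h.symm)), zero_mul,
            mul_zero]
        · rw [if_neg h, mul_zero, mul_zero]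
      rw [Finset.sum_congr rfl fun i _ => Finset.sum_congr rfl fun t _ => zero i t]
      simp [Matrix.one_apply, hjl]
  -- eigenvalues
  refine ⟨ρ, hPSD, htrace, ⟨hH, ?_⟩, hptB, hptA⟩
  have hchar1 : ρ.charpoly = (Matrix.diagonal v).charpoly := by
    rw [hρ]
    exact my_charpoly_conj U (Matrix.diagonal v) hU2 hU1
  have hchar2 : ρ.charpoly =
      (Matrix.diagonal (fun t => ((hH.eigenvalues t : ℝ) : ℂ))).charpoly := by
    have hsp := hH.spectral_theorem
    have hV2 := (Matrix.mem_unitaryGroup_iff).mp (hH.eigenvectorUnitary).2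
    have hV1 := (Matrix.mem_unitaryGroup_iff').mp (hH.eigenvectorUnitary).2
    calc ρ.charpoly
        = ((hH.eigenvectorUnitary : Matrix (Fin d × Fin d) (Fin d × Fin d) ℂ) *
            Matrix.diagonal (RCLike.ofReal ∘ hH.eigenvalues) *
            star (hH.eigenvectorUnitary : Matrix (Fin d × Fin d) (Fin d × Fin d) ℂ)).charpoly := by
          rw [Unitary.conjStarAlgAut_apply] at hsp
          exact congrArg Matrix.charpoly hsp
      _ = (Matrix.diagonal (RCLike.ofReal ∘ hH.eigenvalues)).charpoly :=
          my_charpoly_conj _ _ hV2 hV1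
      _ = _ := rfl
  have hmult : Multiset.map v Finset.univ.val =
      Multiset.map (fun t => ((hH.eigenvalues t : ℝ) : ℂ)) Finset.univ.val := by
    rw [← my_roots_charpoly_diagonal v, ← my_roots_charpoly_diagonal
      (fun t => ((hH.eigenvalues t : ℝ) : ℂ)), ← hchar1, ← hchar2]
  have hmultR : Multiset.map hH.eigenvalues Finset.univ.val =
      Multiset.map g Finset.univ.val := by
    apply Multiset.map_injective (Complex.ofReal_injective)
    rw [Multiset.map_map, Multiset.map_map]
    exact hmult.symm
  -- transport to Fin (d * d)
  set e : Fin d × Fin d ≃ Fin (d * d) := finProdFinEquiv with he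
  have huniv : (Finset.univ.val : Multiset (Fin d × Fin d)) =
      Multiset.map e.symm (Finset.univ.val : Multiset (Fin (d * d))) := by
    have := Finset.univ_map_equiv_to_embedding e.symm
    rw [← this, Finset.map_val]
    rfl
  have hmultN : Multiset.map (hH.eigenvalues ∘ e.symm) Finset.univ.val =
      Multiset.map (g ∘ e.symm) Finset.univ.val := by
    rw [← Multiset.map_map, ← Multiset.map_map, ← huniv]
    exact hmultR
  obtain ⟨τ, hτ⟩ := my_exists_perm_fin (hH.eigenvalues ∘ e.symm) (g ∘ e.symm) hmultN
  refine ⟨(e.trans τ).trans e.symm, fun p => ?_⟩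
  have := congrFun hτ (e p)
  simpa [hg] using this
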